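/- Let e^{−2} < γ < ζ < 1, Ω = {x ∈ ℝⁿ : γ < |x| < ζ}, and f(x) = (|x| − γ)^{|x|}. Then for every β ∈ (γ, ζ], f is NOT β-Hölder continuous on Ω̄: taking x₀ = (γ, 0, …, 0) and xₙ = (γ + (β−γ)/2ⁿ, 0, …, 0), the quotient |f(x₀) − f(xₙ)| / |x₀ − xₙ|^β ≥ ((β−γ)/2ⁿ)^{(γ−β)/2} → ∞ as n → ∞. -/

import Mathlib

open Real Set Metric Filter
open scoped Topology

noncomputable section

/-- The function `f(x) = (|x| - γ)^{|x|}` (real power, with `0^s = 0` for `s ≠ 0`). -/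
def fAnn {n : ℕ} (γ : ℝ) (x : EuclideanSpace ℝ (Fin (n + 1))) : ℝ :=
  (‖x‖ - γ) ^ ‖x‖

/-- The point `(t, 0, …, 0)` in `ℝ^{n+1}`. -/
def ptAnn (n : ℕ) (t : ℝ) : EuclideanSpace ℝ (Fin (n + 1)) :=
  EuclideanSpace.single 0 t

lemma pt_norm (n : ℕ) (a : ℝ) : ‖ptAnn n a‖ = |a| := by
  rw [ptAnn, EuclideanSpace.norm_single, Real.norm_eq_abs]

lemma pt_norm_sub (n : ℕ) (a b : ℝ) : ‖ptAnn n a - ptAnn n b‖ = |a - b| := by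
  have h : ptAnn n a - ptAnn n b = ptAnn n (a - b) := by
    ext j
    simp [ptAnn, EuclideanSpace.single_apply]
    split <;> simp
  rw [h, pt_norm]

lemma quotient_eq (n : ℕ) {γ : ℝ} (hγ0 : 0 < γ) (β : ℝ) {s : ℝ} (hs : 0 < s) :
    |fAnn (n := n) γ (ptAnn n γ) - fAnn (n := n) γ (ptAnn n (γ + s))| /
      ‖ptAnn n γ - ptAnn n (γ + s)‖ ^ β = s ^ (γ + s - β) := by
  have hfγ : fAnn (n := n) γ (ptAnn n γ) = 0 := by
    rw [fAnn, pt_norm, abs_of_pos hγ0, sub_self, Real.zero_rpow hγ0.ne']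
  have hfk : fAnn (n := n) γ (ptAnn n (γ + s)) = s ^ (γ + s) := by
    rw [fAnn, pt_norm, abs_of_pos (by linarith), add_sub_cancel_left]
  have hnorm : ‖ptAnn n γ - ptAnn n (γ + s)‖ = s := by
    rw [pt_norm_sub, show γ - (γ + s) = -s by ring, abs_neg, abs_of_pos hs]
  rw [hfγ, hfk, hnorm, zero_sub, abs_neg, abs_of_pos (Real.rpow_pos_of_pos hs _),
    ← Real.rpow_sub hs]

theorem stmt_7 {n : ℕ} (γ ζ : ℝ) (h1 : Real.exp (-2) < γ) (h2 : γ < ζ) (h3 : ζ < 1)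
    (β : ℝ) (hβ : β ∈ Set.Ioc γ ζ) :
    (¬ ∃ C : ℝ, ∀ x ∈ closure {x : EuclideanSpace ℝ (Fin (n + 1)) | γ < ‖x‖ ∧ ‖x‖ < ζ},
        ∀ y ∈ closure {x : EuclideanSpace ℝ (Fin (n + 1)) | γ < ‖x‖ ∧ ‖x‖ < ζ},
          |fAnn (n := n) γ x - fAnn (n := n) γ y| ≤ C * ‖x - y‖ ^ β) ∧
    (∀ k : ℕ, 1 ≤ k →
      ((β - γ) / 2 ^ k) ^ ((γ - β) / 2) ≤
        |fAnn (n := n) γ (ptAnn n γ) - fAnn (n := n) γ (ptAnn n (γ + (β - γ) / 2 ^ k))| /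
          ‖ptAnn n γ - ptAnn n (γ + (β - γ) / 2 ^ k)‖ ^ β) ∧
    Tendsto
      (fun k : ℕ =>
        |fAnn (n := n) γ (ptAnn n γ) - fAnn (n := n) γ (ptAnn n (γ + (β - γ) / 2 ^ k))| /
          ‖ptAnn n γ - ptAnn n (γ + (β - γ) / 2 ^ k)‖ ^ β)
      atTop atTop := by
  obtain ⟨hγβ, hβζ⟩ := hβ
  have hγ0 : 0 < γ := lt_trans (Real.exp_pos _) h1
  have hc : 0 < β - γ := sub_pos.mpr hγβ
  have hc1 : β - γ < 1 := by linarith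
  have ht0 : ∀ k : ℕ, 0 < (β - γ) / 2 ^ k := fun k => by positivity
  have htle : ∀ k : ℕ, (β - γ) / 2 ^ k ≤ β - γ := fun k => by
    have h2 : (1:ℝ) ≤ 2 ^ k := by
      simpa using pow_le_pow_right₀ (by norm_num : (1:ℝ) ≤ 2) (Nat.zero_le k)
    rw [div_le_iff₀ (by positivity)]
    nlinarith
  have ht1 : ∀ k : ℕ, (β - γ) / 2 ^ k < 1 := fun k => lt_of_le_of_lt (htle k) hc1
  have hthalf : ∀ k : ℕ, 1 ≤ k → (β - γ) / 2 ^ k ≤ (β - γ) / 2 := by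
    intro k hk
    gcongr
    · calc (2:ℝ) = 2 ^ 1 := (pow_one 2).symm
        _ ≤ 2 ^ k := pow_le_pow_right₀ (by norm_num) hk
  -- fold the quotient
  have hQfun : (fun k : ℕ =>
      |fAnn (n := n) γ (ptAnn n γ) - fAnn (n := n) γ (ptAnn n (γ + (β - γ) / 2 ^ k))| /
        ‖ptAnn n γ - ptAnn n (γ + (β - γ) / 2 ^ k)‖ ^ β) =
      fun k : ℕ => ((β - γ) / 2 ^ k) ^ (γ + (β - γ) / 2 ^ k - β) :=
    funext fun k => quotient_eq n hγ0 β (ht0 k)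
  -- part 2
  have part2 : ∀ k : ℕ, 1 ≤ k →
      ((β - γ) / 2 ^ k) ^ ((γ - β) / 2) ≤
        |fAnn (n := n) γ (ptAnn n γ) - fAnn (n := n) γ (ptAnn n (γ + (β - γ) / 2 ^ k))| /
          ‖ptAnn n γ - ptAnn n (γ + (β - γ) / 2 ^ k)‖ ^ β := by
    intro k hk
    rw [quotient_eq n hγ0 β (ht0 k)]
    exact Real.rpow_le_rpow_of_exponent_ge (ht0 k) (ht1 k).le (by nlinarith [hthalf k hk])
  -- the sequence (β-γ)/2^k tends to 0
  have hseq : Tendsto (fun k : ℕ => (β - γ) / 2 ^ k) atTop (𝓝 0) := by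
    have heq : (fun k : ℕ => (β - γ) / 2 ^ k) = fun k : ℕ => (β - γ) * (2⁻¹ : ℝ) ^ k :=
      funext fun k => by rw [div_eq_mul_inv, inv_pow]
    rw [heq]
    simpa using (tendsto_pow_atTop_nhds_zero_of_lt_one (by norm_num : (0:ℝ) ≤ 2⁻¹)
      (by norm_num : (2⁻¹:ℝ) < 1)).const_mul (β - γ)
  -- part 3
  have part3 : Tendsto
      (fun k : ℕ =>
        |fAnn (n := n) γ (ptAnn n γ) - fAnn (n := n) γ (ptAnn n (γ + (β - γ) / 2 ^ k))| /
          ‖ptAnn n γ - ptAnn n (γ + (β - γ) / 2 ^ k)‖ ^ β) atTop atTop := by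
    rw [hQfun]
    have hg : Tendsto (fun k : ℕ => ((β - γ) / 2 ^ k) ^ ((γ - β) / 2)) atTop atTop := by
      have hrw : (fun k : ℕ => ((β - γ) / 2 ^ k) ^ ((γ - β) / 2)) =
          (fun k : ℕ => (((β - γ) / 2 ^ k) ^ ((β - γ) / 2)))⁻¹ := by
        funext k
        rw [Pi.inv_apply, ← Real.rpow_neg (ht0 k).le]
        ring_nf
      rw [hrw]
      apply Filter.Tendsto.inv_tendsto_nhdsGT_zero
      apply tendsto_nhdsWithin_of_tendsto_nhds_of_eventually_within
      · have hcont : ContinuousAt (fun x : ℝ => x ^ ((β - γ) / 2)) 0 :=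
          Real.continuousAt_rpow_const 0 _ (Or.inr (by positivity))
        have := hcont.tendsto.comp hseq
        simpa [Function.comp_def, Real.zero_rpow (show (β - γ) / 2 ≠ 0 by positivity)] using this
      · exact Eventually.of_forall fun k => Real.rpow_pos_of_pos (ht0 k) _
    refine tendsto_atTop_mono' atTop ?_ hg
    filter_upwards [eventually_ge_atTop 1] with k hk
    exact Real.rpow_le_rpow_of_exponent_ge (ht0 k) (ht1 k).le (by nlinarith [hthalf k hk])
  refine ⟨?_, part2, part3⟩
  -- part 1
  rintro ⟨C, hC⟩
  set S := {x : EuclideanSpace ℝ (Fin (n + 1)) | γ < ‖x‖ ∧ ‖x‖ < ζ} with hS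
  have hnormk : ∀ k : ℕ, ‖ptAnn n (γ + (β - γ) / 2 ^ k)‖ = γ + (β - γ) / 2 ^ k := fun k => by
    rw [pt_norm, abs_of_pos (by linarith [ht0 k])]
  have hmem : ∀ k : ℕ, 1 ≤ k → ptAnn n (γ + (β - γ) / 2 ^ k) ∈ S := by
    intro k hk
    refine ⟨?_, ?_⟩ <;> rw [hnormk k]
    · linarith [ht0 k]
    · nlinarith [hthalf k hk]
  have hpt_tendsto : Tendsto (fun k : ℕ => ptAnn n (γ + (β - γ) / 2 ^ k)) atTop
      (𝓝 (ptAnn n γ)) := by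
    rw [tendsto_iff_dist_tendsto_zero]
    have heq : (fun k : ℕ => dist (ptAnn n (γ + (β - γ) / 2 ^ k)) (ptAnn n γ)) =
        fun k : ℕ => (β - γ) / 2 ^ k := funext fun k => by
      rw [dist_eq_norm, pt_norm_sub, add_sub_cancel_left, abs_of_pos (ht0 k)]
    rw [heq]; exact hseq
  have hcl : ptAnn n γ ∈ closure S :=
    mem_closure_of_tendsto hpt_tendsto
      (eventually_atTop.mpr ⟨1, fun k hk => hmem k hk⟩)
  have hle : ∀ k : ℕ, 1 ≤ k →
      |fAnn (n := n) γ (ptAnn n γ) - fAnn (n := n) γ (ptAnn n (γ + (β - γ) / 2 ^ k))| /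
        ‖ptAnn n γ - ptAnn n (γ + (β - γ) / 2 ^ k)‖ ^ β ≤ C := by
    intro k hk
    have hb : 0 < ‖ptAnn n γ - ptAnn n (γ + (β - γ) / 2 ^ k)‖ ^ β := by
      apply Real.rpow_pos_of_pos
      rw [pt_norm_sub, show γ - (γ + (β - γ) / 2 ^ k) = -((β - γ) / 2 ^ k) by ring, abs_neg,
        abs_of_pos (ht0 k)]
      exact ht0 k
    rw [div_le_iff₀ hb]
    exact hC _ hcl _ (subset_closure (hmem k hk))
  obtain ⟨k, hkC, hk1⟩ := ((part3.eventually (eventually_gt_atTop C)).and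
    (eventually_ge_atTop 1)).exists
  exact absurd (hle k hk1) (not_le.mpr hkC)
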